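/- (Complete overdamping) Assume θ = 0 and that R has full rank (R is invertible). If β ≥ 2·ω_max/b_min, then every eigenvalue of the system operator is purely imaginary: for every ζ ∈ σ(A(β)) (equivalently every ζ ∈ ℂ with det C(ζ,β) = 0) one has Re ζ = 0. -/

import Mathlib

open Matrix
open scoped ComplexOrder

noncomputable section

variable {N : ℕ}

/-- A real matrix viewed as a complex matrix. -/
def cm (M : Matrix (Fin N) (Fin N) ℝ) : Matrix (Fin N) (Fin N) ℂ :=
  M.map Complex.ofReal

/-- The quadratic matrix pencil `C(ζ,β) = ζ²α + iζ(2θ + βR) − η`. -/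
def pencil (α η θ R : Matrix (Fin N) (Fin N) ℝ) (β : ℝ) (ζ : ℂ) :
    Matrix (Fin N) (Fin N) ℂ :=
  ζ ^ 2 • cm α + (Complex.I * ζ) • ((2 : ℂ) • cm θ + (β : ℂ) • cm R) - cm η

/-- The square root of a positive semidefinite matrix (removed from Mathlib; old definition). -/
def Matrix.PosSemidef.sqrt {n : Type*} [Fintype n] [DecidableEq n] {A : Matrix n n ℂ}
    (hA : A.PosSemidef) : Matrix n n ℂ :=
  hA.isHermitian.eigenvectorUnitary.1 * diagonal ((↑) ∘ (√·) ∘ hA.isHermitian.eigenvalues) *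
    (star hA.isHermitian.eigenvectorUnitary : Matrix n n ℂ)

section SqrtAux
open scoped MatrixOrder

lemma Matrix.PosSemidef.sqrt_eq_cfc {n : Type*} [Fintype n] [DecidableEq n] {A : Matrix n n ℂ}
    (hA : A.PosSemidef) : hA.sqrt = CFC.sqrt A := by
  rw [CFC.sqrt_eq_cfc, cfc_nnreal_eq_real _ A, hA.1.cfc_eq]
  simp only [IsHermitian.cfc, Unitary.conjStarAlgAut_apply, Matrix.PosSemidef.sqrt]
  congr 3
  funext i
  simp [Real.coe_sqrt, Real.coe_toNNReal', max_eq_left (hA.eigenvalues_nonneg i)]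

lemma Matrix.PosSemidef.posSemidef_sqrt {n : Type*} [Fintype n] [DecidableEq n]
    {A : Matrix n n ℂ} (hA : A.PosSemidef) : hA.sqrt.PosSemidef := by
  rw [hA.sqrt_eq_cfc]; exact Matrix.nonneg_iff_posSemidef.mp (CFC.sqrt_nonneg A)

lemma Matrix.PosSemidef.sqrt_mul_self {n : Type*} [Fintype n] [DecidableEq n]
    {A : Matrix n n ℂ} (hA : A.PosSemidef) : hA.sqrt * hA.sqrt = A := by
  rw [hA.sqrt_eq_cfc]; exact CFC.sqrt_mul_sqrt_self A (Matrix.nonneg_iff_posSemidef.mpr hA)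

lemma Matrix.PosSemidef.sq_sqrt {n : Type*} [Fintype n] [DecidableEq n]
    {A : Matrix n n ℂ} (hA : A.PosSemidef) : hA.sqrt ^ 2 = A := by
  rw [sq, hA.sqrt_mul_self]

lemma Matrix.PosSemidef.eq_sqrt_of_sq_eq {n : Type*} [Fintype n] [DecidableEq n]
    {A : Matrix n n ℂ} (hA : A.PosSemidef) {B : Matrix n n ℂ} (hB : B.PosSemidef)
    (hAB : A ^ 2 = B) : A = hB.sqrt := by
  rw [hB.sqrt_eq_cfc]
  exact (CFC.sqrt_unique (by rw [← sq]; exact hAB) (Matrix.nonneg_iff_posSemidef.mpr hA)).symm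

end SqrtAux

/-- `K_p = (√α)⁻¹`. -/
def Kp {α : Matrix (Fin N) (Fin N) ℝ} (hα : (cm α).PosDef) : Matrix (Fin N) (Fin N) ℂ :=
  (hα.posSemidef.sqrt)⁻¹

/-- `Φ = √η · K_p`. -/
def Phi {α η : Matrix (Fin N) (Fin N) ℝ} (hα : (cm α).PosDef) (hη : (cm η).PosSemidef) :
    Matrix (Fin N) (Fin N) ℂ :=
  hη.sqrt * Kp hα

/-- `R̃ = K_p R K_p`. -/
def Rt (R : Matrix (Fin N) (Fin N) ℝ) {α : Matrix (Fin N) (Fin N) ℝ} (hα : (cm α).PosDef) :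
    Matrix (Fin N) (Fin N) ℂ :=
  Kp hα * cm R * Kp hα

/-- `Ω_p = −2i K_p θ K_p`. -/
def Omp (θ : Matrix (Fin N) (Fin N) ℝ) {α : Matrix (Fin N) (Fin N) ℝ} (hα : (cm α).PosDef) :
    Matrix (Fin N) (Fin N) ℂ :=
  ((-2 : ℂ) * Complex.I) • (Kp hα * cm θ * Kp hα)

/-- `Ω = [[Ω_p, −iΦᵀ],[iΦ, 0]]`. -/
def Om (θ : Matrix (Fin N) (Fin N) ℝ) {α η : Matrix (Fin N) (Fin N) ℝ}
    (hα : (cm α).PosDef) (hη : (cm η).PosSemidef) :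
    Matrix (Fin N ⊕ Fin N) (Fin N ⊕ Fin N) ℂ :=
  fromBlocks (Omp θ hα) ((-Complex.I) • (Phi hα hη)ᵀ) (Complex.I • Phi hα hη) 0

/-- `B = [[R̃, 0],[0, 0]]`. -/
def Bm (R : Matrix (Fin N) (Fin N) ℝ) {α : Matrix (Fin N) (Fin N) ℝ} (hα : (cm α).PosDef) :
    Matrix (Fin N ⊕ Fin N) (Fin N ⊕ Fin N) ℂ :=
  fromBlocks (Rt R hα) 0 0 0

/-- The system operator `A(β) = Ω − iβB`. -/
def Asys (θ R : Matrix (Fin N) (Fin N) ℝ) {α η : Matrix (Fin N) (Fin N) ℝ}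
    (hα : (cm α).PosDef) (hη : (cm η).PosSemidef) (β : ℝ) :
    Matrix (Fin N ⊕ Fin N) (Fin N ⊕ Fin N) ℂ :=
  Om θ hα hη - (Complex.I * (β : ℂ)) • Bm R hα

/-- The ℓ²→ℓ² operator norm of a complex matrix. -/
def opN {n : Type*} [Fintype n] [DecidableEq n] (M : Matrix n n ℂ) : ℝ :=
  ‖Matrix.toEuclideanCLM (𝕜 := ℂ) M‖

/-- `ω_max = ‖Ω‖`. -/
def omegaMax (θ : Matrix (Fin N) (Fin N) ℝ) {α η : Matrix (Fin N) (Fin N) ℝ}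
    (hα : (cm α).PosDef) (hη : (cm η).PosSemidef) : ℝ :=
  opN (Om θ hα hη)

/-- `b_min`, the smallest nonzero eigenvalue of `B`. -/
def bMin (R : Matrix (Fin N) (Fin N) ℝ) {α : Matrix (Fin N) (Fin N) ℝ} (hα : (cm α).PosDef) : ℝ :=
  sInf {r : ℝ | r ≠ 0 ∧ (r : ℂ) ∈ spectrum ℂ (Bm R hα)}


/-! ### Auxiliary lemmas -/

section Aux

abbrev cconj := starRingEnd ℂ

lemma conj_cm (M : Matrix (Fin N) (Fin N) ℝ) : (cm M).map cconj = cm M := by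
  ext i j; simp [cm]

lemma psd_conj {n : Type*} [Fintype n] {S : Matrix n n ℂ} (hS : S.PosSemidef) :
    (S.map cconj).PosSemidef := by
  refine Matrix.PosSemidef.of_dotProduct_mulVec_nonneg ?_ ?_
  · exact hS.1.map cconj (fun z => by simp)
  · intro x
    have key : star x ⬝ᵥ (S.map cconj) *ᵥ x = cconj (star (star x) ⬝ᵥ S *ᵥ (star x)) := by
      simp only [dotProduct, Matrix.mulVec, map_sum, Matrix.map_apply, Finset.mul_sum]
      congr 1; ext i; congr 1; ext j; simp
    rw [key]
    have h2 := hS.dotProduct_mulVec_nonneg (star x)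
    rw [Complex.nonneg_iff] at h2 ⊢
    simp only [Complex.conj_re, Complex.conj_im]
    exact ⟨h2.1, by linarith [h2.2]⟩

lemma conj_sqrt {A : Matrix (Fin N) (Fin N) ℂ} (hA : A.PosSemidef)
    (h : A.map cconj = A) : hA.sqrt.map cconj = hA.sqrt := by
  have hpsd := psd_conj hA.posSemidef_sqrt
  have hsq : (hA.sqrt.map cconj) ^ 2 = A := by
    rw [pow_two, ← Matrix.map_mul, ← pow_two, hA.sq_sqrt, h]
  exact hpsd.eq_sqrt_of_sq_eq hA hsq

variable {α η R : Matrix (Fin N) (Fin N) ℝ}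

lemma sqrtA_isUnit_det (hα : (cm α).PosDef) : IsUnit (hα.posSemidef.sqrt).det := by
  have h1 : (hα.posSemidef.sqrt).det * (hα.posSemidef.sqrt).det = (cm α).det := by
    rw [← Matrix.det_mul, hα.posSemidef.sqrt_mul_self]
  have h2 : (cm α).det ≠ 0 := ne_of_gt hα.det_pos
  rw [isUnit_iff_ne_zero]
  intro h; rw [h, mul_zero] at h1; exact h2 h1.symm

lemma Kp_mul_sqrtA (hα : (cm α).PosDef) : Kp hα * hα.posSemidef.sqrt = 1 :=
  Matrix.nonsing_inv_mul _ (sqrtA_isUnit_det hα)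

lemma sqrtA_mul_Kp (hα : (cm α).PosDef) : hα.posSemidef.sqrt * Kp hα = 1 :=
  Matrix.mul_nonsing_inv _ (sqrtA_isUnit_det hα)

lemma conj_Kp (hα : (cm α).PosDef) : (Kp hα).map cconj = Kp hα := by
  show _ = (hα.posSemidef.sqrt)⁻¹
  refine (Matrix.inv_eq_left_inv ?_).symm
  rw [← conj_sqrt hα.posSemidef (conj_cm α), ← Matrix.map_mul, Kp_mul_sqrtA]
  ext i j
  by_cases h : i = j <;> simp [h, Matrix.one_apply]

lemma Kp_isHermitian (hα : (cm α).PosDef) : (Kp hα).IsHermitian := by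
  unfold Kp
  rw [Matrix.IsHermitian, Matrix.conjTranspose_nonsing_inv,
    hα.posSemidef.posSemidef_sqrt.1.eq]

lemma Kp_mulVec_ne_zero (hα : (cm α).PosDef) {p : Fin N → ℂ} (hp : p ≠ 0) :
    Kp hα *ᵥ p ≠ 0 := by
  intro h
  apply hp
  have h2 : (hα.posSemidef.sqrt * Kp hα) *ᵥ p = hα.posSemidef.sqrt *ᵥ (Kp hα *ᵥ p) :=
    (Matrix.mulVec_mulVec _ _ _).symm
  rw [sqrtA_mul_Kp, h, Matrix.mulVec_zero, Matrix.one_mulVec] at h2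
  exact h2

lemma dot_shift {n : Type*} [Fintype n] {A : Matrix n n ℂ} (hA : A.IsHermitian)
    (x y : n → ℂ) : star x ⬝ᵥ (A *ᵥ y) = star (A *ᵥ x) ⬝ᵥ y := by
  rw [Matrix.star_mulVec, ← Matrix.dotProduct_mulVec, hA.eq]

lemma conj_Phi (hα : (cm α).PosDef) (hη : (cm η).PosSemidef) :
    (Phi hα hη).map cconj = Phi hα hη := by
  unfold Phi
  rw [Matrix.map_mul, conj_sqrt hη (conj_cm η), conj_Kp]

lemma Phi_tr (hα : (cm α).PosDef) (hη : (cm η).PosSemidef) :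
    (Phi hα hη)ᵀ = (Phi hα hη)ᴴ := by
  ext i j
  have h2 := congrArg (fun M => M j i) (conj_Phi hα hη)
  simp only [Matrix.map_apply] at h2
  simp only [Matrix.transpose_apply, Matrix.conjTranspose_apply]
  exact h2.symm

lemma Rt_posDef (hα : (cm α).PosDef) (hR : (cm R).PosDef) : (Rt R hα).PosDef := by
  refine Matrix.PosDef.of_dotProduct_mulVec_pos ?_ ?_
  · show _ = _
    simp only [Rt, Matrix.conjTranspose_mul, (Kp_isHermitian hα).eq, hR.isHermitian.eq,
      Matrix.mul_assoc]
  · intro x hx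
    have hx' := Kp_mulVec_ne_zero hα hx
    have heq : star x ⬝ᵥ (Rt R hα *ᵥ x) =
        star (Kp hα *ᵥ x) ⬝ᵥ (cm R *ᵥ (Kp hα *ᵥ x)) := by
      unfold Rt
      rw [← Matrix.mulVec_mulVec, ← Matrix.mulVec_mulVec, dot_shift (Kp_isHermitian hα)]
    rw [heq]
    exact hR.dotProduct_mulVec_pos hx'

lemma dot_self_re (n : Type*) [Fintype n] (x : n → ℂ) :
    star x ⬝ᵥ x = ((star x ⬝ᵥ x).re : ℂ) ∧ (star x ⬝ᵥ x).re = ∑ i, Complex.normSq (x i) := by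
  have h : star x ⬝ᵥ x = ((∑ i, Complex.normSq (x i) : ℝ) : ℂ) := by
    simp only [dotProduct, Pi.star_apply, Complex.ofReal_sum]
    congr 1; ext i
    rw [RCLike.star_def, mul_comm, Complex.mul_conj]
  refine ⟨?_, ?_⟩ <;> rw [h] <;> simp

lemma dot_self_pos {n : Type*} [Fintype n] {x : n → ℂ} (hx : x ≠ 0) :
    0 < (star x ⬝ᵥ x).re := by
  rw [(dot_self_re n x).2]
  have ⟨i, hi⟩ : ∃ i, x i ≠ 0 := by
    by_contra h; push_neg at h; exact hx (funext h)
  exact Finset.sum_pos' (fun j _ => Complex.normSq_nonneg _)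
    ⟨i, Finset.mem_univ i, Complex.normSq_pos.mpr hi⟩

lemma conj_dot {n : Type*} [Fintype n] (u v : n → ℂ) :
    cconj (star u ⬝ᵥ v) = star v ⬝ᵥ u := by
  simp only [dotProduct, map_sum, Pi.star_apply, _root_.map_mul, RCLike.star_def,
    Complex.conj_conj]
  exact Finset.sum_congr rfl fun i _ => mul_comm _ _

lemma herm_dot_real {n : Type*} [Fintype n] {A : Matrix n n ℂ} (hA : A.IsHermitian)
    (x : n → ℂ) : star x ⬝ᵥ (A *ᵥ x) = ((star x ⬝ᵥ (A *ᵥ x)).re : ℂ) := by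
  refine (Complex.conj_eq_iff_re.mp ?_).symm
  rw [conj_dot, ← dot_shift hA]

lemma rayleigh {n : Type*} [Fintype n] [DecidableEq n] {M : Matrix n n ℂ}
    (hM : M.IsHermitian) {c : ℝ} (hc : ∀ i, c ≤ hM.eigenvalues i) (p : n → ℂ) :
    c * (star p ⬝ᵥ p).re ≤ (star p ⬝ᵥ (M *ᵥ p)).re := by
  set U : Matrix n n ℂ := (hM.eigenvectorUnitary : Matrix n n ℂ) with hU
  have hUU : U * (star U) = 1 := (Matrix.mem_unitaryGroup_iff).mp hM.eigenvectorUnitary.2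
  have hdiag : Matrix.diagonal (RCLike.ofReal ∘ hM.eigenvalues) - (c : ℂ) • 1 =
      Matrix.diagonal (fun i => ((hM.eigenvalues i - c : ℝ) : ℂ)) := by
    rw [← Matrix.diagonal_one, ← Matrix.diagonal_smul, Matrix.diagonal_sub]
    ext i j; by_cases h : i = j <;> simp [h]
  have key : M - (c : ℂ) • 1 =
      U * (Matrix.diagonal (fun i => ((hM.eigenvalues i - c : ℝ) : ℂ))) * (star U) := by
    rw [← hdiag, Matrix.mul_sub, Matrix.sub_mul, Matrix.mul_smul, Matrix.mul_one,
      Matrix.smul_mul, hUU]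
    conv_lhs => rw [hM.spectral_theorem]
    rfl
  have hpsd : (M - (c : ℂ) • 1).PosSemidef := by
    rw [key]
    apply Matrix.PosSemidef.mul_mul_conjTranspose_same
    refine Matrix.posSemidef_diagonal_iff.mpr fun i => ?_
    rw [Complex.nonneg_iff]
    constructor
    · simpa using sub_nonneg.mpr (hc i)
    · simp
  have h2 := hpsd.dotProduct_mulVec_nonneg p
  rw [Complex.nonneg_iff] at h2
  have h3 : star p ⬝ᵥ ((M - (c : ℂ) • 1) *ᵥ p) =
      star p ⬝ᵥ (M *ᵥ p) - (c : ℂ) * (star p ⬝ᵥ p) := by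
    rw [Matrix.sub_mulVec, dotProduct_sub]
    congr 1
    rw [Matrix.smul_mulVec, Matrix.one_mulVec, dotProduct_smul]
    simp [smul_eq_mul]
  rw [h3] at h2
  have h4 := h2.1
  simp only [Complex.sub_re, Complex.mul_re, Complex.ofReal_re, Complex.ofReal_im] at h4
  linarith [h4]

end Aux

section Aux2

lemma mem_spec_iff_det {n : Type*} [Fintype n] [DecidableEq n] (M : Matrix n n ℂ) (z : ℂ) :
    z ∈ spectrum ℂ M ↔ (z • (1 : Matrix n n ℂ) - M).det = 0 := by
  rw [spectrum.mem_iff, Matrix.isUnit_iff_isUnit_det, isUnit_iff_ne_zero, not_not]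
  congr! 2
  rw [Matrix.algebraMap_eq_diagonal]
  ext i j
  by_cases h : i = j <;> simp [h, Matrix.one_apply, Matrix.diagonal_apply]

lemma eucl_norm_sq {n : Type*} [Fintype n] (x : n → ℂ) :
    ‖(WithLp.equiv 2 (n → ℂ)).symm x‖ ^ 2 = (star x ⬝ᵥ x).re := by
  rw [(dot_self_re n x).2, EuclideanSpace.norm_eq, Real.sq_sqrt (by positivity)]
  congr 1; ext i
  rw [Complex.sq_norm]; rfl

variable {α η R : Matrix (Fin N) (Fin N) ℝ}

lemma cm_zero : cm (0 : Matrix (Fin N) (Fin N) ℝ) = 0 := by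
  ext i j; simp [cm]

lemma Omp_zero (hα : (cm α).PosDef) : Omp 0 hα = 0 := by
  unfold Omp
  rw [cm_zero, Matrix.mul_zero, Matrix.zero_mul, smul_zero]

lemma sum_dot (a b c d : Fin N → ℂ) :
    star (Sum.elim a b) ⬝ᵥ Sum.elim c d = star a ⬝ᵥ c + star b ⬝ᵥ d := by
  simp only [dotProduct, Fintype.sum_sum_type]
  rfl

lemma smul_dot_self {n : Type*} [Fintype n] (c : ℂ) (u : n → ℂ) (hc : Complex.normSq c = 1) :
    star (c • u) ⬝ᵥ (c • u) = star u ⬝ᵥ u := by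
  rw [star_smul, smul_dotProduct, dotProduct_smul, smul_smul]
  have h1 : (star c * c : ℂ) = 1 := by
    rw [Complex.star_def, mul_comm, Complex.mul_conj, hc]; simp
  rw [h1, one_smul]

lemma phi_bound (hα : (cm α).PosDef) (hη : (cm η).PosSemidef) (p : Fin N → ℂ) :
    (star (Phi hα hη *ᵥ p) ⬝ᵥ (Phi hα hη *ᵥ p)).re ≤
      (omegaMax 0 hα hη) ^ 2 * (star p ⬝ᵥ p).re := by
  set M := Om 0 hα hη with hM
  set v : EuclideanSpace ℂ (Fin N ⊕ Fin N) :=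
    (WithLp.equiv 2 (Fin N ⊕ Fin N → ℂ)).symm (Sum.elim p 0) with hv
  have hMv : M *ᵥ Sum.elim p 0 =
      Sum.elim (0 : Fin N → ℂ) (Complex.I • (Phi hα hη *ᵥ p)) := by
    have hcl : (Sum.elim p (0 : Fin N → ℂ)) ∘ Sum.inl = p := rfl
    have hcr : (Sum.elim p (0 : Fin N → ℂ)) ∘ Sum.inr = 0 := rfl
    rw [hM]
    unfold Om
    rw [Omp_zero, Matrix.fromBlocks_mulVec, hcl, hcr]
    simp [Matrix.zero_mulVec, Matrix.mulVec_zero, Matrix.smul_mulVec]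
  have happ : (Matrix.toEuclideanCLM (𝕜 := ℂ) M) v =
      (WithLp.equiv 2 (Fin N ⊕ Fin N → ℂ)).symm (Sum.elim (0 : Fin N → ℂ) (Complex.I • (Phi hα hη *ᵥ p))) := by
    rw [hv, ← hMv]; rfl
  have hle : ‖(Matrix.toEuclideanCLM (𝕜 := ℂ) M) v‖ ≤ opN M * ‖v‖ :=
    ContinuousLinearMap.le_opNorm _ v
  have hsq : ‖(Matrix.toEuclideanCLM (𝕜 := ℂ) M) v‖ ^ 2 ≤ (opN M) ^ 2 * ‖v‖ ^ 2 := by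
    rw [← mul_pow]
    exact pow_le_pow_left₀ (norm_nonneg _) hle 2
  rw [happ, eucl_norm_sq] at hsq
  rw [hv, eucl_norm_sq] at hsq
  rw [sum_dot, sum_dot] at hsq
  rw [smul_dot_self _ _ (by simp)] at hsq
  simp only [star_zero, zero_dotProduct, dotProduct_zero,
    zero_add, add_zero] at hsq
  simpa [omegaMax, hM] using hsq

end Aux2

section Aux3

lemma scalar_quad {a r h : ℝ} (ha : 0 < a) (hr : 0 ≤ r) (hd : 4 * a * h ≤ r ^ 2)
    {ζ : ℂ} (heq : (a : ℂ) * ζ ^ 2 + Complex.I * r * ζ - h = 0) : ζ.re = 0 := by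
  set x := ζ.re
  set y := ζ.im
  have hre : a * (x ^ 2 - y ^ 2) - r * y - h = 0 := by
    have := congrArg Complex.re heq
    simp [Complex.ext_iff, Complex.mul_re, Complex.mul_im, pow_two] at this ⊢
    ring_nf at this ⊢
    linarith [this]
  have him : 2 * a * x * y + r * x = 0 := by
    have := congrArg Complex.im heq
    simp [Complex.ext_iff, Complex.mul_re, Complex.mul_im, pow_two] at this ⊢
    ring_nf at this ⊢
    linarith [this]
  by_contra hx
  have h2 : 2 * a * y + r = 0 := by
    have hfac : x * (2 * a * y + r) = 0 := by ring_nf; ring_nf at him; linarith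
    rcases mul_eq_zero.mp hfac with hcase | hcase
    · exact absurd hcase hx
    · exact hcase
  have hry : r = -(2 * a * y) := by linarith
  have hx2 : 0 < x ^ 2 := by positivity
  have h3 : a * x ^ 2 = h - a * y ^ 2 := by
    rw [hry] at hre; nlinarith [hre]
  rw [hry] at hd
  nlinarith [mul_pos ha hx2, mul_pos ha (mul_pos ha hx2)]

lemma dot_shiftH {n : Type*} [Fintype n] (A : Matrix n n ℂ) (x y : n → ℂ) :
    star x ⬝ᵥ (Aᴴ *ᵥ y) = star (A *ᵥ x) ⬝ᵥ y := by
  rw [Matrix.dotProduct_mulVec, ← Matrix.star_mulVec]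

lemma dot_self_nonneg {n : Type*} [Fintype n] (x : n → ℂ) : 0 ≤ (star x ⬝ᵥ x).re := by
  rw [(dot_self_re n x).2]
  exact Finset.sum_nonneg fun i _ => Complex.normSq_nonneg _

lemma exists_eigvec {n : Type*} [Fintype n] [DecidableEq n] {M : Matrix n n ℂ} {z : ℂ}
    (h : (z • (1 : Matrix n n ℂ) - M).det = 0) : ∃ v, v ≠ 0 ∧ M *ᵥ v = z • v := by
  obtain ⟨v, hv0, hv⟩ := (Matrix.exists_mulVec_eq_zero_iff).mpr h
  refine ⟨v, hv0, ?_⟩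
  rw [Matrix.sub_mulVec, sub_eq_zero, Matrix.smul_mulVec, Matrix.one_mulVec] at hv
  exact hv.symm

variable {α η R : Matrix (Fin N) (Fin N) ℝ}

lemma spec_Bm_iff (hα : (cm α).PosDef) (z : ℂ) :
    z ∈ spectrum ℂ (Bm R hα) ↔
      ((z • (1 : Matrix (Fin N) (Fin N) ℂ) - Rt R hα).det) * z ^ N = 0 := by
  rw [mem_spec_iff_det]
  have h1 : z • (1 : Matrix (Fin N ⊕ Fin N) (Fin N ⊕ Fin N) ℂ) - Bm R hα =
      fromBlocks (z • 1 - Rt R hα) 0 0 (z • (1 : Matrix (Fin N) (Fin N) ℂ)) := by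
    unfold Bm
    ext i j
    rcases i with i | i <;> rcases j with j | j <;>
      simp [Matrix.one_apply, Matrix.smul_apply, Matrix.sub_apply, smul_eq_mul]
  rw [h1, Matrix.det_fromBlocks_zero₁₂, Matrix.det_smul, Matrix.det_one,
    Fintype.card_fin, mul_one]

end Aux3

/-- **Complete overdamping** (`θ = 0`, `R` of full rank). If `β ≥ 2 ω_max / b_min` then every
eigenvalue of the system operator `A(β)` (equivalently, every root of `det C(·,β)`) is
purely imaginary. -/
theorem complete_overdamping
    {N : ℕ} (hN : 1 ≤ N)
    (α η R : Matrix (Fin N) (Fin N) ℝ)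
    (hα : (cm α).PosDef) (hη : (cm η).PosSemidef)
    (hR : (cm R).PosDef)
    (β : ℝ) (hβ : 2 * omegaMax 0 hα hη / bMin R hα ≤ β) :
    (∀ ζ ∈ spectrum ℂ (Asys 0 R hα hη β), ζ.re = 0) ∧
    (∀ ζ : ℂ, (pencil α η 0 R β ζ).det = 0 → ζ.re = 0) := by
  have hNE : Nonempty (Fin N) := ⟨⟨0, hN⟩⟩
  have hRt : (Rt R hα).PosDef := Rt_posDef hα hR
  have hH : (Rt R hα).IsHermitian := hRt.1
  -- minimal eigenvalue of R̃
  obtain ⟨i0, hi0⟩ := Finite.exists_min hH.eigenvalues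
  set lmin : ℝ := hH.eigenvalues i0 with hlmin
  have hlminpos : 0 < lmin := hRt.eigenvalues_pos i0
  have hrayleigh : ∀ v : Fin N → ℂ,
      lmin * (star v ⬝ᵥ v).re ≤ (star v ⬝ᵥ (Rt R hα *ᵥ v)).re :=
    fun v => rayleigh hH (fun i => hi0 i) v
  -- `bMin` equals the minimal eigenvalue
  set S : Set ℝ := {r : ℝ | r ≠ 0 ∧ (r : ℂ) ∈ spectrum ℂ (Bm R hα)} with hS
  have hlminS : lmin ∈ S := by
    refine ⟨ne_of_gt hlminpos, ?_⟩
    rw [spec_Bm_iff hα]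
    have hmem : ((lmin : ℂ)) ∈ spectrum ℂ (Rt R hα) :=
      spectrum.algebraMap_mem ℂ (hH.eigenvalues_mem_spectrum_real i0)
    rw [mem_spec_iff_det] at hmem
    rw [hmem, zero_mul]
  have hSlb : ∀ s ∈ S, lmin ≤ s := by
    rintro s ⟨hs0, hsmem⟩
    rw [spec_Bm_iff hα] at hsmem
    rcases mul_eq_zero.mp hsmem with hdet | hpow
    · obtain ⟨v, hv0, hv⟩ := exists_eigvec hdet
      have h1 : star v ⬝ᵥ (Rt R hα *ᵥ v) = (s : ℂ) * (star v ⬝ᵥ v) := by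
        rw [hv, dotProduct_smul, smul_eq_mul]
      have h2 : (star v ⬝ᵥ (Rt R hα *ᵥ v)).re = s * (star v ⬝ᵥ v).re := by
        rw [h1, (dot_self_re _ v).1, ← Complex.ofReal_mul]
        simp
      have h3 := hrayleigh v
      rw [h2] at h3
      exact le_of_mul_le_mul_right (by linarith [h3]) (dot_self_pos hv0)
    · exfalso
      exact hs0 (by exact_mod_cast pow_eq_zero_iff (by omega : N ≠ 0) |>.mp hpow)
  have hbMin_le : bMin R hα ≤ lmin := csInf_le ⟨lmin, fun s hs => hSlb s hs⟩ hlminS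
  have hbMin_ge : lmin ≤ bMin R hα := le_csInf ⟨lmin, hlminS⟩ hSlb
  have hbMinpos : 0 < bMin R hα := lt_of_lt_of_le hlminpos hbMin_ge
  have homega0 : 0 ≤ omegaMax 0 hα hη := norm_nonneg _
  have hβ0 : 0 ≤ β :=
    le_trans (div_nonneg (by linarith) hbMinpos.le) hβ
  have hbb : 2 * omegaMax 0 hα hη ≤ β * bMin R hα := by
    rw [div_le_iff₀ hbMinpos] at hβ
    linarith [hβ]
  -- the core discriminant inequality
  have core : ∀ p : Fin N → ℂ, p ≠ 0 → ∀ ζ : ℂ,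
      (((star p ⬝ᵥ p).re : ℂ) * ζ ^ 2
        + Complex.I * ((β * (star p ⬝ᵥ (Rt R hα *ᵥ p)).re : ℝ) : ℂ) * ζ
        - ((star (Phi hα hη *ᵥ p) ⬝ᵥ (Phi hα hη *ᵥ p)).re : ℂ) = 0) → ζ.re = 0 := by
    intro p hp ζ heq
    set a : ℝ := (star p ⬝ᵥ p).re with ha'
    set rr : ℝ := (star p ⬝ᵥ (Rt R hα *ᵥ p)).re with hrr'
    set hh : ℝ := (star (Phi hα hη *ᵥ p) ⬝ᵥ (Phi hα hη *ᵥ p)).re with hhh'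
    have hapos : 0 < a := dot_self_pos hp
    have hhnn : 0 ≤ hh := dot_self_nonneg _
    have hrb : bMin R hα * a ≤ rr := by
      calc bMin R hα * a ≤ lmin * a :=
            mul_le_mul_of_nonneg_right hbMin_le hapos.le
        _ ≤ rr := hrayleigh p
    have hrnn : 0 ≤ β * rr := by
      have : 0 ≤ bMin R hα * a := by positivity
      nlinarith [hrb]
    have hphi : hh ≤ (omegaMax 0 hα hη) ^ 2 * a := phi_bound hα hη p
    have h1 : 2 * omegaMax 0 hα hη * a ≤ β * rr := by
      calc 2 * omegaMax 0 hα hη * a ≤ (β * bMin R hα) * a :=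
            mul_le_mul_of_nonneg_right hbb hapos.le
        _ = β * (bMin R hα * a) := by ring
        _ ≤ β * rr := mul_le_mul_of_nonneg_left hrb hβ0
    have h2 : (2 * omegaMax 0 hα hη * a) ^ 2 ≤ (β * rr) ^ 2 :=
      pow_le_pow_left₀ (by positivity) h1 2
    have hd : 4 * a * hh ≤ (β * rr) ^ 2 := by nlinarith [hphi, h2, hapos.le]
    exact scalar_quad hapos hrnn hd heq
  constructor
  · -- spectrum of the system operator
    intro ζ hζ
    by_cases hζ0 : ζ = 0
    · simp [hζ0]
    rw [mem_spec_iff_det] at hζ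
    obtain ⟨v, hv0, hv⟩ := exists_eigvec hζ
    set p : Fin N → ℂ := v ∘ Sum.inl with hp'
    set q : Fin N → ℂ := v ∘ Sum.inr with hq'
    have hvelim : v = Sum.elim p q := by funext x; cases x <;> rfl
    have hcl : (Sum.elim p q) ∘ Sum.inl = p := rfl
    have hcr : (Sum.elim p q) ∘ Sum.inr = q := rfl
    have hOmv : Om 0 hα hη *ᵥ v =
        Sum.elim ((-Complex.I) • ((Phi hα hη)ᵀ *ᵥ q)) (Complex.I • (Phi hα hη *ᵥ p)) := by
      rw [hvelim]
      unfold Om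
      rw [Omp_zero, Matrix.fromBlocks_mulVec, hcl, hcr]
      simp [Matrix.zero_mulVec, Matrix.smul_mulVec, Matrix.neg_mulVec]
    have hBmv : Bm R hα *ᵥ v = Sum.elim (Rt R hα *ᵥ p) (0 : Fin N → ℂ) := by
      rw [hvelim]
      unfold Bm
      rw [Matrix.fromBlocks_mulVec, hcl, hcr]
      simp [Matrix.zero_mulVec, Matrix.mulVec_zero]
    have hv2 : Om 0 hα hη *ᵥ v - (Complex.I * (β : ℂ)) • (Bm R hα *ᵥ v) = ζ • v := by
      rw [← Matrix.smul_mulVec, ← Matrix.sub_mulVec]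
      exact hv
    rw [hOmv, hBmv, hvelim] at hv2
    have eq1 : (-Complex.I) • ((Phi hα hη)ᵀ *ᵥ q)
        - (Complex.I * (β : ℂ)) • (Rt R hα *ᵥ p) = ζ • p := by
      funext i
      have := congrFun hv2 (Sum.inl i)
      simpa using this
    have eq2 : Complex.I • (Phi hα hη *ᵥ p) = ζ • q := by
      funext i
      have := congrFun hv2 (Sum.inr i)
      simpa using this
    have hpne : p ≠ 0 := by
      intro hp0
      apply hv0
      rw [hp0] at eq2
      rw [Matrix.mulVec_zero, smul_zero] at eq2
      have hq0 : q = 0 := by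
        rcases smul_eq_zero.mp eq2.symm with h | h
        · exact absurd h hζ0
        · exact h
      rw [hvelim, hp0, hq0]
      funext x; cases x <;> rfl
    -- scalar equation
    have d1 : (-Complex.I) * (star (Phi hα hη *ᵥ p) ⬝ᵥ q)
        - (Complex.I * (β : ℂ)) * (star p ⬝ᵥ (Rt R hα *ᵥ p))
        = ζ * (star p ⬝ᵥ p) := by
      have := congrArg (fun w => star p ⬝ᵥ w) eq1
      simpa only [dotProduct_sub, dotProduct_smul, smul_eq_mul,
        Phi_tr hα hη, dot_shiftH] using this
    have e2 : ζ * (star (Phi hα hη *ᵥ p) ⬝ᵥ q)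
        = Complex.I * (star (Phi hα hη *ᵥ p) ⬝ᵥ (Phi hα hη *ᵥ p)) := by
      have := congrArg (fun w => star (Phi hα hη *ᵥ p) ⬝ᵥ w) eq2
      simpa only [dotProduct_smul, smul_eq_mul] using this.symm
    apply core p hpne ζ
    push_cast
    rw [← (dot_self_re _ p).1, ← (dot_self_re _ (Phi hα hη *ᵥ p)).1,
      ← herm_dot_real hH p]
    linear_combination (-ζ) * d1 + (-Complex.I) * e2 + (-(star (Phi hα hη *ᵥ p) ⬝ᵥ Phi hα hη *ᵥ p)) * Complex.I_sq
  · -- roots of the pencil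
    intro ζ hdet
    by_cases hζ0 : ζ = 0
    · simp [hζ0]
    obtain ⟨x, hx0, hx⟩ := (Matrix.exists_mulVec_eq_zero_iff).mpr hdet
    set p : Fin N → ℂ := hα.posSemidef.sqrt *ᵥ x with hpdef
    have hxp : Kp hα *ᵥ p = x := by
      rw [hpdef, Matrix.mulVec_mulVec, Kp_mul_sqrtA, Matrix.one_mulVec]
    have hpne : p ≠ 0 := by
      intro hp0
      apply hx0
      rw [← hxp, hp0, Matrix.mulVec_zero]
    -- identify the three quadratic forms
    have hAq : star x ⬝ᵥ (cm α *ᵥ x) = star p ⬝ᵥ p := by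
      conv_lhs => rw [← hα.posSemidef.sqrt_mul_self, ← Matrix.mulVec_mulVec,
        dot_shift hα.posSemidef.posSemidef_sqrt.1]
    have hHq : star x ⬝ᵥ (cm η *ᵥ x) =
        star (Phi hα hη *ᵥ p) ⬝ᵥ (Phi hα hη *ᵥ p) := by
      have hPhip : Phi hα hη *ᵥ p = hη.sqrt *ᵥ x := by
        unfold Phi
        rw [← Matrix.mulVec_mulVec, hxp]
      rw [hPhip]
      conv_lhs => rw [← hη.sqrt_mul_self, ← Matrix.mulVec_mulVec,
        dot_shift hη.posSemidef_sqrt.1]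
    have hRq : star x ⬝ᵥ (cm R *ᵥ x) = star p ⬝ᵥ (Rt R hα *ᵥ p) := by
      have hRtp : Rt R hα *ᵥ p = Kp hα *ᵥ (cm R *ᵥ x) := by
        unfold Rt
        rw [← Matrix.mulVec_mulVec, hxp, Matrix.mulVec_mulVec]
      rw [hRtp, dot_shift (Kp_isHermitian hα), hxp]
    -- scalar pencil equation
    have hsc : ζ ^ 2 * (star x ⬝ᵥ (cm α *ᵥ x))
        + (Complex.I * ζ) * ((β : ℂ) * (star x ⬝ᵥ (cm R *ᵥ x)))
        - (star x ⬝ᵥ (cm η *ᵥ x)) = 0 := by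
      have := congrArg (fun w => star x ⬝ᵥ w) hx
      simp only [pencil, cm_zero, smul_zero, zero_add, Matrix.add_mulVec,
        Matrix.sub_mulVec, Matrix.smul_mulVec, dotProduct_add,
        dotProduct_sub, dotProduct_smul, smul_eq_mul,
        dotProduct_zero] at this
      linear_combination this
    apply core p hpne ζ
    push_cast
    rw [← (dot_self_re _ p).1, ← (dot_self_re _ (Phi hα hη *ᵥ p)).1,
      ← herm_dot_real hH p, ← hAq, ← hHq, ← hRq]
    linear_combination hsc
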